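/- Let G = ⟨a, b, c⟩ be a free group of rank 3, with b_i = b^{c^i}, b_f, a_f as usual, and let ℬ ⊆ 𝓔. Let φ be the automorphism of G sending a ↦ a, b ↦ b^c, c ↦ c. Then φ(A_ℬ) = A_{σ(ℬ)}, where σ(ℬ) = {f : ∃ g ∈ ℬ, ∀ i, f(i) = g(i-1)}. Consequently, if A_ℬ is benign in G then so is A_{σ(ℬ)}. -/

import Mathlib

namespace Stmt18

/-- A group is finitely presented if it is isomorphic to a presented group with
finitely many generators and finitely many relators. -/
def FinitelyPresentedGroup (K : Type*) [Group K] : Prop :=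
  ∃ (n : ℕ) (rels : Set (FreeGroup (Fin n))), rels.Finite ∧
    Nonempty (K ≃* PresentedGroup rels)

/-- A subgroup `H` of a group `G` is benign in `G` if `G` embeds into some finitely
presented group `K` possessing a finitely generated subgroup `L` with `G ∩ L = H`. -/
def Benign {G : Type*} [Group G] (H : Subgroup G) : Prop :=
  ∃ (K : Type) (_ : Group K) (φ : G →* K) (L : Subgroup K),
    Function.Injective φ ∧ FinitelyPresentedGroup K ∧ L.FG ∧ L.comap φ = H

/-- `G` is the free group of rank 3 on `a`, `b`, `c`. -/
abbrev G := FreeGroup (Fin 3)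

def a : G := FreeGroup.of 0
def b : G := FreeGroup.of 1
def c : G := FreeGroup.of 2

/-- `b_i = c^{-i} b c^i`. -/
def bi (i : ℤ) : G := c ^ (-i) * b * c ^ i

/-- `b_f`: the product of the `b_i^{f(i)}` in increasing order of `i`. -/
def bf (f : ℤ →₀ ℤ) : G := ((f.support.sort (· ≤ ·)).map fun i => bi i ^ f i).prod

/-- `a_f = b_f⁻¹ a b_f`. -/
def af (f : ℤ →₀ ℤ) : G := (bf f)⁻¹ * a * bf f

/-- `A_ℬ = ⟨a_f : f ∈ ℬ⟩`. -/
def Agrp (B : Set (ℤ →₀ ℤ)) : Subgroup G := Subgroup.closure (af '' B)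

/-- The Higman operation `σ`. -/
def sigma (B : Set (ℤ →₀ ℤ)) : Set (ℤ →₀ ℤ) := {f | ∃ g ∈ B, ∀ i : ℤ, f i = g (i - 1)}

/-- The automorphism `φ` of `G` sending `a ↦ a`, `b ↦ b^c`, `c ↦ c`. -/
def φm : G →* G := FreeGroup.lift ![a, c⁻¹ * b * c, c]

def ψm : G →* G := FreeGroup.lift ![a, c * b * c⁻¹, c]

lemma φm_a : φm a = a := by simp [φm, a, FreeGroup.lift_apply_of]
lemma φm_b : φm b = c⁻¹ * b * c := by simp [φm, b, FreeGroup.lift_apply_of]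
lemma φm_c : φm c = c := by simp [φm, c, FreeGroup.lift_apply_of]
lemma ψm_a : ψm a = a := by simp [ψm, a, FreeGroup.lift_apply_of]
lemma ψm_b : ψm b = c * b * c⁻¹ := by simp [ψm, b, FreeGroup.lift_apply_of]
lemma ψm_c : ψm c = c := by simp [ψm, c, FreeGroup.lift_apply_of]

lemma ψφ : ψm.comp φm = MonoidHom.id G := by
  apply FreeGroup.ext_hom
  intro x
  fin_cases x <;>
    simp [show FreeGroup.of (0:Fin 3) = a from rfl, show FreeGroup.of (1:Fin 3) = b from rfl,
      show FreeGroup.of (2:Fin 3) = c from rfl, φm_a, φm_b, φm_c, ψm_a, ψm_b, ψm_c, mul_assoc]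

lemma φψ : φm.comp ψm = MonoidHom.id G := by
  apply FreeGroup.ext_hom
  intro x
  fin_cases x <;>
    simp [show FreeGroup.of (0:Fin 3) = a from rfl, show FreeGroup.of (1:Fin 3) = b from rfl,
      show FreeGroup.of (2:Fin 3) = c from rfl, φm_a, φm_b, φm_c, ψm_a, ψm_b, ψm_c, mul_assoc]

noncomputable def φe : G ≃* G := MonoidHom.toMulEquiv φm ψm ψφ φψ

lemma φm_bi (i : ℤ) : φm (bi i) = bi (i + 1) := by
  simp only [bi, map_mul, map_zpow, φm_b, φm_c]
  rw [show c ^ (-(i+1)) = c ^ (-i) * c⁻¹ by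
      rw [show -(i+1) = -i + -1 by ring, zpow_add, zpow_neg_one],
    show c ^ (i+1) = c * c ^ i by rw [show i+1 = 1+i by ring, zpow_add, zpow_one]]
  group

noncomputable def shift (g : ℤ →₀ ℤ) : ℤ →₀ ℤ :=
  Finsupp.embDomain ⟨fun i => i + 1, add_left_injective 1⟩ g

lemma shift_apply (g : ℤ →₀ ℤ) (i : ℤ) : shift g i = g (i - 1) := by
  have := Finsupp.embDomain_apply_self ⟨fun i => i + 1, add_left_injective 1⟩ g (i - 1)
  simpa [shift] using this

lemma sigma_eq (B : Set (ℤ →₀ ℤ)) : sigma B = shift '' B := by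
  ext f
  constructor
  · rintro ⟨g, hg, h⟩
    exact ⟨g, hg, (Finsupp.ext fun i => (h i).symm ▸ (shift_apply g i).symm).symm ▸ rfl⟩
  · rintro ⟨g, hg, rfl⟩
    exact ⟨g, hg, fun i => shift_apply g i⟩

lemma shift_sort (g : ℤ →₀ ℤ) :
    (shift g).support.sort (· ≤ ·) = (g.support.sort (· ≤ ·)).map (· + 1) := by
  haveI : IsAntisymm ℤ (· ≤ ·) := ⟨fun _ _ => le_antisymm⟩
  refine (fun hp h1 h2 => List.Perm.eq_of_pairwise' (r := (· ≤ ·)) h1 h2 hp) ?_ ?_ ?_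
  · apply List.perm_of_nodup_nodup_toFinset_eq (Finset.sort_nodup _ _)
    · exact (Finset.sort_nodup _ _).map fun x y => by omega
    · ext x
      simp [shift, Finsupp.support_embDomain, List.mem_toFinset, Finset.mem_map]
  · exact Finset.pairwise_sort _ _
  · exact List.Pairwise.map _ (fun x y hxy => by omega)
      (Finset.pairwise_sort g.support (· ≤ ·))

lemma φm_bf (g : ℤ →₀ ℤ) : φm (bf g) = bf (shift g) := by
  simp only [bf, shift_sort, List.map_map, List.prod_hom _ φm |>.symm]
  congr 1
  apply List.map_congr_left
  intro i _
  simp only [Function.comp, map_zpow, φm_bi]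
  rw [shift_apply, show i + 1 - 1 = i by ring]

lemma φm_af (g : ℤ →₀ ℤ) : φm (af g) = af (shift g) := by
  simp [af, φm_bf, φm_a]


/-- `φ` maps `A_ℬ` onto `A_{σ(ℬ)}`; consequently, if `A_ℬ` is benign in `G` then
so is `A_{σ(ℬ)}`. -/
theorem benign_sigma (B : Set (ℤ →₀ ℤ)) :
    (Agrp B).map φm = Agrp (sigma B) ∧ (Benign (Agrp B) → Benign (Agrp (sigma B))) := by
  have hmap : (Agrp B).map φm = Agrp (sigma B) := by
    rw [Agrp, MonoidHom.map_closure, sigma_eq, Agrp, ← Set.image_comp, ← Set.image_comp]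
    congr 1
    ext f
    simp [Function.comp, φm_af]
  refine ⟨hmap, ?_⟩
  rintro ⟨K, _, φ, L, hinj, hfp, hfg, hL⟩
  refine ⟨K, ‹_›, φ.comp (φe.symm : G →* G), L, ?_, hfp, hfg, ?_⟩
  · exact hinj.comp φe.symm.injective
  · rw [← Subgroup.comap_comap, hL, ← hmap]
    have : (Agrp B).map φm = (Agrp B).map (φe : G →* G) := rfl
    rw [this, Subgroup.map_equiv_eq_comap_symm]

end Stmt18
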